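/- Let N be a positive integer and let d(N) denote the number of positive divisors of N. The d(N) × d(N) matrix A over ℚ, with rows and columns indexed by the positive divisors of N, whose entry indexed by (d, δ) is A_{d,δ} = (N · gcd(d,δ)²) / (24 · gcd(d, N/d) · d · δ), is invertible (equivalently, has nonzero determinant). -/

import Mathlib

open ArithmeticFunction Finset Matrix
open scoped ArithmeticFunction.zeta

/-- The second Jordan totient as a rational arithmetic function. -/
noncomputable def J2 : ArithmeticFunction ℚ :=
  ((ArithmeticFunction.pow 2 : ArithmeticFunction ℕ) : ArithmeticFunction ℚ) *
    ((ArithmeticFunction.moebius : ArithmeticFunction ℤ) : ArithmeticFunction ℚ)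

lemma J2_sum (n : ℕ) : ∑ e ∈ n.divisors, J2 e = (n : ℚ) ^ 2 := by
  have h : (∑ e ∈ n.divisors, J2 e) = (J2 * ζ) n := (coe_mul_zeta_apply).symm
  rw [h, J2, mul_assoc, coe_moebius_mul_coe_zeta, mul_one, natCoe_apply, pow_apply]
  simp

lemma J2_isMultiplicative : J2.IsMultiplicative :=
  (isMultiplicative_pow.natCast).mul (isMultiplicative_moebius.intCast)

lemma J2_prime_pow {p k : ℕ} (hp : p.Prime) (hk : k ≠ 0) :
    J2 (p ^ k) = ((p : ℚ) ^ k) ^ 2 - ((p : ℚ) ^ (k - 1)) ^ 2 := by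
  obtain ⟨m, rfl⟩ := Nat.exists_eq_succ_of_ne_zero hk
  rw [J2, mul_comm, ArithmeticFunction.mul_apply, Nat.sum_divisorsAntidiagonal
    (fun a b => ((moebius : ArithmeticFunction ℤ) : ArithmeticFunction ℚ) a
      * (((ArithmeticFunction.pow 2 : ArithmeticFunction ℕ) : ArithmeticFunction ℚ) b)),
    Nat.sum_divisors_prime_pow hp]
  rw [Finset.sum_range_succ', Finset.sum_range_succ']
  have hz : ∀ i ∈ Finset.range m, ((moebius : ArithmeticFunction ℤ) : ArithmeticFunction ℚ) (p ^ (i + 1 + 1))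
      * (((ArithmeticFunction.pow 2 : ArithmeticFunction ℕ) : ArithmeticFunction ℚ) (p ^ (m + 1) / p ^ (i + 1 + 1))) = 0 := by
    intro i _
    rw [intCoe_apply, moebius_apply_prime_pow hp (by omega)]
    simp
  rw [Finset.sum_congr rfl hz, Finset.sum_const_zero, zero_add]
  have h1 : p ^ m.succ / p ^ (0 + 1) = p ^ m := by
    rw [Nat.pow_div (by omega) hp.pos]; norm_num
  have h0 : p ^ m.succ / p ^ 0 = p ^ (m + 1) := by simp
  rw [h1, h0]
  simp only [pow_one, pow_zero, moebius_apply_one, moebius_apply_prime hp,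
    natCoe_apply, pow_apply, intCoe_apply]
  have hm : m.succ - 1 = m := rfl
  simp only [hm, zero_add, pow_one, moebius_apply_prime hp, false_and, if_false,
    Nat.succ_eq_add_one]
  push_cast
  simp only [false_and, if_false]
  ring

lemma J2_ne_zero {n : ℕ} (hn : n ≠ 0) : J2 n ≠ 0 := by
  rw [J2_isMultiplicative.multiplicative_factorization J2 hn]
  refine Finset.prod_ne_zero_iff.mpr fun p hp => ?_
  have hpp : p.Prime := Nat.prime_of_mem_primeFactors (by simpa using hp)
  have hk : n.factorization p ≠ 0 := by
    exact Finsupp.mem_support_iff.mp hp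
  simp only []
  rw [J2_prime_pow hpp hk]
  have h1 : (p : ℚ) ^ (n.factorization p - 1) < (p : ℚ) ^ (n.factorization p) := by
    apply pow_lt_pow_right₀ (by exact_mod_cast hpp.one_lt)
    omega
  have hp0 : (0:ℚ) < (p:ℚ) := by exact_mod_cast hpp.pos
  have h0 : (0:ℚ) < (p : ℚ) ^ (n.factorization p - 1) := pow_pos hp0 _
  nlinarith

/-- The matrix of Ligozat's formula is invertible: for a positive integer `N`, the
square matrix over `ℚ` indexed by the positive divisors of `N`, with entry
`(N · gcd(d,δ)²) / (24 · gcd(d, N/d) · d · δ)` in position `(d, δ)`, has nonzero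
determinant (equivalently, is invertible). -/
theorem ligozat_matrix_invertible (N : ℕ) (hN : 0 < N) :
    IsUnit (Matrix.of fun d δ : {m : ℕ // m ∈ N.divisors} =>
      ((N : ℚ) * (Nat.gcd d δ : ℚ) ^ 2) /
        (24 * (Nat.gcd d (N / d) : ℚ) * (d : ℚ) * (δ : ℚ))) := by
  classical
  have hNe : N ≠ 0 := hN.ne'
  set ι := {m : ℕ // m ∈ N.divisors} with hι
  have hdvd : ∀ d : ι, (d : ℕ) ∣ N := fun d => (Nat.mem_divisors.mp d.2).1
  have hpos : ∀ d : ι, 0 < (d : ℕ) := fun d => Nat.pos_of_mem_divisors d.2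
  set M : Matrix ι ι ℚ := Matrix.of fun d e : ι => if (e : ℕ) ∣ (d : ℕ) then 1 else 0 with hMdef
  set W : Matrix ι ι ℚ := Matrix.of fun e e' : ι =>
    if (e' : ℕ) ∣ (e : ℕ) then ((moebius ((e : ℕ) / (e' : ℕ)) : ℤ) : ℚ) else 0 with hWdef
  have hMW : M * W = 1 := by
    ext d e'
    rw [Matrix.mul_apply, Matrix.one_apply]
    set g : ℕ → ℚ := fun n => (if n ∣ (d : ℕ) then (1:ℚ) else 0) *
      (if (e' : ℕ) ∣ n then ((moebius (n / (e' : ℕ)) : ℤ) : ℚ) else 0) with hgdef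
    have hrw : ∀ e : ι, M d e * W e e' = g (e : ℕ) := fun e => rfl
    rw [Finset.sum_congr rfl (fun e _ => hrw e),
      ← Finset.sum_subtype N.divisors (fun x => Iff.rfl) g]
    have hsub : ∑ e ∈ N.divisors, g e = ∑ e ∈ (d : ℕ).divisors, g e := by
      refine (Finset.sum_subset (Nat.divisors_subset_of_dvd hNe (hdvd d)) ?_).symm
      intro x hx hxd
      have hnd : ¬ x ∣ (d : ℕ) := fun h => hxd (Nat.mem_divisors.mpr ⟨h, (hpos d).ne'⟩)
      simp [hgdef, hnd]
    rw [hsub]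
    by_cases he' : (e' : ℕ) ∣ (d : ℕ)
    · have hg : ∀ x ∈ (d : ℕ).divisors, g x =
          if (e' : ℕ) ∣ x then ((moebius (x / (e' : ℕ)) : ℤ) : ℚ) else 0 := by
        intro x hx; simp [hgdef, (Nat.mem_divisors.mp hx).1]
      rw [Finset.sum_congr rfl hg, ← Finset.sum_filter]
      have hbij : ∑ x ∈ (d : ℕ).divisors.filter ((e' : ℕ) ∣ ·),
          ((moebius (x / (e' : ℕ)) : ℤ) : ℚ)
          = ∑ k ∈ ((d : ℕ) / (e' : ℕ)).divisors, ((moebius k : ℤ) : ℚ) := by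
        refine Finset.sum_nbij' (i := fun x => x / (e' : ℕ)) (j := fun k => (e' : ℕ) * k)
          ?_ ?_ ?_ ?_ ?_
        · intro a ha
          rcases Finset.mem_filter.mp ha with ⟨ha1, ha2⟩
          rcases Nat.mem_divisors.mp ha1 with ⟨had, _⟩
          obtain ⟨b, hb⟩ := ha2
          obtain ⟨c, hc⟩ := had
          have hd' : (d : ℕ) / (e' : ℕ) = b * c := by
            rw [hc, hb, mul_assoc, Nat.mul_div_cancel_left _ (hpos e')]
          have ha' : a / (e' : ℕ) = b := by
            rw [hb, Nat.mul_div_cancel_left _ (hpos e')]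
          refine Nat.mem_divisors.mpr ⟨?_, ?_⟩
          · show a / (e' : ℕ) ∣ (d : ℕ) / (e' : ℕ)
            rw [ha', hd']; exact dvd_mul_right b c
          · exact (Nat.div_pos (Nat.le_of_dvd (hpos d) he') (hpos e')).ne'
        · intro b hb
          rcases Nat.mem_divisors.mp hb with ⟨hbd, _⟩
          refine Finset.mem_filter.mpr ⟨Nat.mem_divisors.mpr ⟨?_, (hpos d).ne'⟩, Dvd.intro b rfl⟩
          calc (e' : ℕ) * b ∣ (e' : ℕ) * ((d : ℕ) / (e' : ℕ)) := mul_dvd_mul_left _ hbd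
            _ = (d : ℕ) := Nat.mul_div_cancel' he'
        · intro a ha
          exact Nat.mul_div_cancel' (Finset.mem_filter.mp ha).2
        · intro b hb
          exact Nat.mul_div_cancel_left b (Nat.pos_of_dvd_of_pos he' (hpos d))
        · intro a ha; rfl
      rw [hbij]
      have hmu : ∑ k ∈ ((d : ℕ) / (e' : ℕ)).divisors, ((moebius k : ℤ) : ℚ)
          = if (d : ℕ) / (e' : ℕ) = 1 then 1 else 0 := by
        simp only [← intCoe_apply]
        rw [← coe_mul_zeta_apply, coe_moebius_mul_coe_zeta, ArithmeticFunction.one_apply]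
      rw [hmu]
      have hiff : ((d : ℕ) / (e' : ℕ) = 1) ↔ d = e' := by
        rw [Subtype.ext_iff]
        constructor
        · intro h
          have h2 := Nat.eq_mul_of_div_eq_right he' h
          simpa using h2
        · intro h
          rw [h]
          exact Nat.div_self (hpos e')
      simp [hiff]
    · have hz : ∀ x ∈ (d : ℕ).divisors, g x = 0 := by
        intro x hx
        rcases Nat.mem_divisors.mp hx with ⟨hxd, _⟩
        by_cases h2 : (e' : ℕ) ∣ x
        · exact absurd (h2.trans hxd) he'
        · simp [hgdef, h2]
      rw [Finset.sum_eq_zero hz, if_neg]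
      rintro rfl
      exact he' (dvd_refl _)
  have hMunit : IsUnit M := by
    have := invertibleOfRightInverse M W hMW
    exact isUnit_of_invertible M
  have hMTunit : IsUnit Mᵀ :=
    (Matrix.isUnit_iff_isUnit_det _).mpr
      (by rw [Matrix.det_transpose]; exact (Matrix.isUnit_iff_isUnit_det M).mp hMunit)
  set D : Matrix ι ι ℚ := Matrix.diagonal fun e : ι => J2 (e : ℕ) with hDdef
  have hDunit : IsUnit D := by
    rw [hDdef, Matrix.isUnit_diagonal]
    refine IsUnit.of_mul_eq_one (fun e => (J2 (e : ℕ))⁻¹) (funext fun e => ?_)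
    exact mul_inv_cancel₀ (J2_ne_zero (hpos e).ne')
  have hB : ∀ d δ : ι, (M * D * Mᵀ) d δ = ((Nat.gcd d δ : ℕ) : ℚ) ^ 2 := by
    intro d δ
    rw [Matrix.mul_apply]
    have hterm : ∀ e : ι, (M * D) d e * Mᵀ e δ =
        (fun n : ℕ => if n ∣ Nat.gcd d δ then J2 n else 0) (e : ℕ) := by
      intro e
      rw [hDdef, Matrix.mul_diagonal, Matrix.transpose_apply]
      show (if (e:ℕ) ∣ (d:ℕ) then (1:ℚ) else 0) * J2 (e:ℕ) *
        (if (e:ℕ) ∣ (δ:ℕ) then (1:ℚ) else 0) = _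
      by_cases h1 : (e : ℕ) ∣ (d : ℕ) <;> by_cases h2 : (e : ℕ) ∣ (δ : ℕ) <;>
        simp [h1, h2, Nat.dvd_gcd_iff]
    rw [Finset.sum_congr rfl (fun e _ => hterm e),
      ← Finset.sum_subtype N.divisors (fun x => Iff.rfl)
        (fun n : ℕ => if n ∣ Nat.gcd d δ then J2 n else 0),
      ← Finset.sum_filter, Nat.divisors_filter_dvd_of_dvd hNe
        ((Nat.gcd_dvd_left _ _).trans (hdvd d)), J2_sum]
  set u : Matrix ι ι ℚ := Matrix.diagonal fun d : ι =>
    (N : ℚ) / (24 * (Nat.gcd d (N / d) : ℚ) * (d : ℚ)) with hudef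
  set v : Matrix ι ι ℚ := Matrix.diagonal fun δ : ι => ((δ : ℕ) : ℚ)⁻¹ with hvdef
  have huunit : IsUnit u := by
    rw [hudef, Matrix.isUnit_diagonal]
    have hne : ∀ d : ι, (N : ℚ) / (24 * (Nat.gcd d (N / d) : ℚ) * (d : ℚ)) ≠ 0 := by
      intro d
      have hc : 0 < Nat.gcd (d : ℕ) (N / (d : ℕ)) := Nat.gcd_pos_of_pos_left _ (hpos d)
      have h1 : (0:ℚ) < (Nat.gcd (d : ℕ) (N / (d : ℕ)) : ℚ) := by exact_mod_cast hc
      have h2 : (0:ℚ) < ((d : ℕ) : ℚ) := by exact_mod_cast hpos d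
      have h3 : (0:ℚ) < (N : ℚ) := by exact_mod_cast hN
      positivity
    refine IsUnit.of_mul_eq_one (fun d => ((N : ℚ) / (24 * (Nat.gcd d (N / d) : ℚ) * (d : ℚ)))⁻¹)
      (funext fun d => mul_inv_cancel₀ (hne d))
  have hvunit : IsUnit v := by
    rw [hvdef, Matrix.isUnit_diagonal]
    have hne : ∀ δ : ι, (((δ : ℕ) : ℚ))⁻¹ ≠ 0 := by
      intro δ
      refine inv_ne_zero ?_
      exact_mod_cast (hpos δ).ne'
    exact IsUnit.of_mul_eq_one (fun δ => (((δ : ℕ) : ℚ))⁻¹⁻¹)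
      (funext fun δ => mul_inv_cancel₀ (hne δ))
  have hA : (Matrix.of fun d δ : ι =>
      ((N : ℚ) * (Nat.gcd d δ : ℚ) ^ 2) /
        (24 * (Nat.gcd d (N / d) : ℚ) * (d : ℚ) * (δ : ℚ)))
      = u * (M * D * Mᵀ) * v := by
    ext d δ
    rw [Matrix.mul_diagonal, Matrix.diagonal_mul, hB d δ]
    have hc : (0:ℚ) < (Nat.gcd (d:ℕ) (N/(d:ℕ)) : ℚ) := by
      exact_mod_cast Nat.gcd_pos_of_pos_left _ (hpos d)
    have hd2 : (0:ℚ) < ((d:ℕ):ℚ) := by exact_mod_cast hpos d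
    have hδ : (0:ℚ) < ((δ:ℕ):ℚ) := by exact_mod_cast hpos δ
    show (N : ℚ) * (Nat.gcd d δ : ℚ) ^ 2 /
        (24 * (Nat.gcd d (N / d) : ℚ) * (d : ℚ) * (δ : ℚ)) = _
    field_simp
  rw [hA]
  exact ((huunit.mul ((hMunit.mul hDunit).mul hMTunit)).mul hvunit)
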